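/- With the setup of the previous construction (finite set S ⊆ ℚ × ℚ satisfying the skew closure condition, basis vectors v_{(i,j)}), suppose S is centrally symmetric and i+j ∈ ℤ for all (i,j) ∈ S. Define the symmetric bilinear form B by B(v_{(i,j)}, v_{(−k,−l)}) = δ_{ik}δ_{jl}, and define ê1(v_{(i,j)}) = (−1)^{i+j} v_{(i+1,j)} (zero if (i+1,j) ∉ S) and ê2(v_{(i,j)}) = (−1)^{i+j+1} v_{(i,j+1)} (zero if (i,j+1) ∉ S). Then ê1 and ê2 commute and both are skew with respect to B: B(ê_a x, y) = −B(x, ê_a y) for a = 1, 2. -/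

import Mathlib

theorem stmt9 {K V : Type*} [Field K] [CharZero K] [AddCommGroup V] [Module K V]
    (S : Finset (ℚ × ℚ))
    (hsym : ∀ p : ℚ × ℚ, p ∈ S ↔ (-p.1, -p.2) ∈ S)
    (hclosure : ∀ i j : ℚ, (i, j) ∈ S → (i + 1, j + 1) ∈ S →
      (i + 1, j) ∈ S ∧ (i, j + 1) ∈ S)
    (hint : ∀ p ∈ S, ∃ z : ℤ, (z : ℚ) = p.1 + p.2)
    (b : Module.Basis {p : ℚ × ℚ // p ∈ S} K V)
    (B : LinearMap.BilinForm K V)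
    (hB : ∀ (p : ℚ × ℚ) (hp : p ∈ S) (q : ℚ × ℚ) (hq : q ∈ S),
      B (b ⟨p, hp⟩) (b ⟨q, hq⟩) = if p.1 = -q.1 ∧ p.2 = -q.2 then 1 else 0)
    (e1 e2 : Module.End K V)
    (he1 : ∀ (p : ℚ × ℚ) (hp : p ∈ S) (z : ℤ), (z : ℚ) = p.1 + p.2 →
      e1 (b ⟨p, hp⟩) = if h : (p.1 + 1, p.2) ∈ S then
        ((-1 : K) ^ z) • b ⟨(p.1 + 1, p.2), h⟩ else 0)
    (he2 : ∀ (p : ℚ × ℚ) (hp : p ∈ S) (z : ℤ), (z : ℚ) = p.1 + p.2 →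
      e2 (b ⟨p, hp⟩) = if h : (p.1, p.2 + 1) ∈ S then
        ((-1 : K) ^ (z + 1)) • b ⟨(p.1, p.2 + 1), h⟩ else 0) :
    Commute e1 e2 ∧ (∀ x y, B (e1 x) y = - B x (e1 y)) ∧
      (∀ x y, B (e2 x) y = - B x (e2 y)) := by
  have hne : (-1 : K) ≠ 0 := by norm_num
  have hpow : ∀ a c : ℤ, Even (a - c) → (-1:K)^a = (-1)^c := by
    intro a c h
    obtain ⟨d, hd⟩ := h
    have : a = c + 2*d := by linarith
    rw [this, zpow_add₀ hne, zpow_mul]; norm_num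
  have skew : ∀ (f : Module.End K V),
      (∀ (p : ℚ × ℚ) (hp : p ∈ S) (q : ℚ × ℚ) (hq : q ∈ S),
        B (f (b ⟨p, hp⟩)) (b ⟨q, hq⟩) = - B (b ⟨p, hp⟩) (f (b ⟨q, hq⟩))) →
      ∀ x y, B (f x) y = - B x (f y) := by
    intro f h x y
    have heq : B.compl₁₂ f LinearMap.id = - B.compl₂ f := by
      apply LinearMap.ext_basis b b
      rintro ⟨p, hp⟩ ⟨q, hq⟩
      simpa using h p hp q hq
    have := LinearMap.congr_fun (LinearMap.congr_fun heq x) y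
    simpa using this
  refine ⟨?_, ?_, ?_⟩
  · show e1 * e2 = e2 * e1
    apply b.ext
    rintro ⟨⟨i, j⟩, hp⟩
    obtain ⟨z, hz0⟩ := hint _ hp
    have hz : (z : ℚ) = i + j := hz0
    simp only [Module.End.mul_apply]
    rw [he2 (i, j) hp z hz, he1 (i, j) hp z hz]
    by_cases h3 : (i + 1, j + 1) ∈ S
    · obtain ⟨h1, h2⟩ := hclosure i j hp h3
      rw [dif_pos h2, dif_pos h1, map_smul, map_smul,
        he1 (i, j+1) h2 (z+1) (by push_cast; rw [hz]; ring),
        he2 (i+1, j) h1 (z+1) (by push_cast; rw [hz]; ring),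
        dif_pos h3, dif_pos h3, smul_smul, smul_smul]
      congr 1
      rw [← zpow_add₀ hne, ← zpow_add₀ hne]
      congr 1
      ring
    · have l1 : e1 (if h : (i, j+1) ∈ S then ((-1:K)^(z+1)) • b ⟨(i, j+1), h⟩ else 0) = 0 := by
        split_ifs with h2
        · rw [map_smul, he1 (i, j+1) h2 (z+1) (by push_cast; rw [hz]; ring), dif_neg h3, smul_zero]
        · simp
      have l2 : e2 (if h : (i+1, j) ∈ S then ((-1:K)^z) • b ⟨(i+1, j), h⟩ else 0) = 0 := by
        split_ifs with h1
        · rw [map_smul, he2 (i+1, j) h1 (z+1) (by push_cast; rw [hz]; ring), dif_neg h3, smul_zero]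
        · simp
      rw [l1, l2]
  · apply skew
    rintro ⟨i, j⟩ hp ⟨k, l⟩ hq
    obtain ⟨z, hz0⟩ := hint _ hp
    obtain ⟨w, hw0⟩ := hint _ hq
    have hz : (z : ℚ) = i + j := hz0
    have hw : (w : ℚ) = k + l := hw0
    have L : B (e1 (b ⟨(i, j), hp⟩)) (b ⟨(k, l), hq⟩)
        = if i + 1 = -k ∧ j = -l then (-1:K)^z else 0 := by
      rw [he1 (i, j) hp z hz]
      split_ifs with h1 hcond hcond
      · rw [map_smul, LinearMap.smul_apply, smul_eq_mul, hB (i+1, j) h1 (k, l) hq,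
          if_pos hcond, mul_one]
      · rw [map_smul, LinearMap.smul_apply, smul_eq_mul, hB (i+1, j) h1 (k, l) hq,
          if_neg hcond, mul_zero]
      · exact absurd (by rw [hcond.1, hcond.2]; exact (hsym (k, l)).mp hq) h1
      · simp
    have R : B (b ⟨(i, j), hp⟩) (e1 (b ⟨(k, l), hq⟩))
        = if i = -(k+1) ∧ j = -l then (-1:K)^w else 0 := by
      rw [he1 (k, l) hq w hw]
      split_ifs with h2 hcond hcond
      · rw [map_smul, smul_eq_mul, hB (i, j) hp (k+1, l) h2, if_pos hcond, mul_one]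
      · rw [map_smul, smul_eq_mul, hB (i, j) hp (k+1, l) h2, if_neg hcond, mul_zero]
      · refine absurd ?_ h2
        have e1' : (k + 1 : ℚ) = -i := by linarith [hcond.1]
        have e2' : (l : ℚ) = -j := by linarith [hcond.2]
        rw [e1', e2']; exact (hsym (i, j)).mp hp
      · simp
    rw [L, R]
    by_cases hc : i + 1 = -k ∧ j = -l
    · rw [if_pos hc, if_pos ⟨by linarith [hc.1], hc.2⟩]
      have hwz : w = -z - 1 := by
        have : (w : ℚ) = ((-z - 1 : ℤ) : ℚ) := by
          push_cast; linarith [hz, hw, hc.1, hc.2]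
        exact_mod_cast this
      rw [hwz, hpow (-z-1) (z+1) ⟨-z-1, by ring⟩, zpow_add₀ hne]
      simp
    · rw [if_neg hc, if_neg (fun h => hc ⟨by linarith [h.1], h.2⟩), neg_zero]
  · apply skew
    rintro ⟨i, j⟩ hp ⟨k, l⟩ hq
    obtain ⟨z, hz0⟩ := hint _ hp
    obtain ⟨w, hw0⟩ := hint _ hq
    have hz : (z : ℚ) = i + j := hz0
    have hw : (w : ℚ) = k + l := hw0
    have L : B (e2 (b ⟨(i, j), hp⟩)) (b ⟨(k, l), hq⟩)
        = if i = -k ∧ j + 1 = -l then (-1:K)^(z+1) else 0 := by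
      rw [he2 (i, j) hp z hz]
      split_ifs with h1 hcond hcond
      · rw [map_smul, LinearMap.smul_apply, smul_eq_mul, hB (i, j+1) h1 (k, l) hq,
          if_pos hcond, mul_one]
      · rw [map_smul, LinearMap.smul_apply, smul_eq_mul, hB (i, j+1) h1 (k, l) hq,
          if_neg hcond, mul_zero]
      · exact absurd (by rw [hcond.1, hcond.2]; exact (hsym (k, l)).mp hq) h1
      · simp
    have R : B (b ⟨(i, j), hp⟩) (e2 (b ⟨(k, l), hq⟩))
        = if i = -k ∧ j = -(l+1) then (-1:K)^(w+1) else 0 := by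
      rw [he2 (k, l) hq w hw]
      split_ifs with h2 hcond hcond
      · rw [map_smul, smul_eq_mul, hB (i, j) hp (k, l+1) h2, if_pos hcond, mul_one]
      · rw [map_smul, smul_eq_mul, hB (i, j) hp (k, l+1) h2, if_neg hcond, mul_zero]
      · refine absurd ?_ h2
        have e1' : (k : ℚ) = -i := by linarith [hcond.1]
        have e2' : (l + 1 : ℚ) = -j := by linarith [hcond.2]
        rw [e1', e2']; exact (hsym (i, j)).mp hp
      · simp
    rw [L, R]
    by_cases hc : i = -k ∧ j + 1 = -l
    · rw [if_pos hc, if_pos ⟨hc.1, by linarith [hc.2]⟩]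
      have hwz : w = -z - 1 := by
        have : (w : ℚ) = ((-z - 1 : ℤ) : ℚ) := by
          push_cast; linarith [hz, hw, hc.1, hc.2]
        exact_mod_cast this
      rw [hwz, show (-z - 1 + 1 : ℤ) = -z by ring, hpow (-z) z ⟨-z, by ring⟩,
        zpow_add₀ hne]
      simp
    · rw [if_neg hc, if_neg (fun h => hc ⟨h.1, by linarith [h.2]⟩), neg_zero]
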